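/- Let X = U ⊕ V be a topological direct sum of a Banach space, let π : X → U be the projection along V, and let U' ⊆ X be a closed subspace with π|_{U'} : U' → U Fredholm, so that U' = {x + Tx : x ∈ π(U')} ⊕ F with F finite dimensional and T : π(U') → V bounded. Then U' is commensurate with U (i.e., the projection of U' to U is Fredholm and the projection of U' to any complement of U is compact) if and only if the operator T is compact. Moreover, in this case U is also commensurate with U', so commensurability is a symmetric relation. -/

import Mathlib

set_option synthInstance.maxHeartbeats 400000
set_option maxHeartbeats 2000000


/-!
Statement 1 (Commensurability and compactness of the graph map):
With `X = U ⊕ V` realized by a continuous idempotent `π` (range `U`, kernel `V`), and a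
closed subspace `U'` with `π|_{U'}` Fredholm, so that `U' = {x + Tx : x ∈ π(U')} ⊕ F`
(`F = ker (π|_{U'})` finite dimensional, `T : π(U') → V` bounded), we have:
`U'` is commensurate with `U` iff `T` is compact, and in that case `U` is also
commensurate with `U'` (commensurability is symmetric).
-/

/-- The restriction of `q` to `S`, viewed as a map into `LinearMap.range (q : X →ₗ[ℝ] X)`, is Fredholm. -/
def IsFredholmRestriction {X : Type*} [NormedAddCommGroup X] [NormedSpace ℝ X]
    (q : X →L[ℝ] X) (S : Submodule ℝ X) : Prop :=
  FiniteDimensional ℝ ↥(S ⊓ LinearMap.ker (q : X →ₗ[ℝ] X)) ∧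
    IsClosed ((S.map (q : X →ₗ[ℝ] X) : Submodule ℝ X) : Set X) ∧
    FiniteDimensional ℝ
      (↥(LinearMap.range (q : X →ₗ[ℝ] X)) ⧸ (S.map (q : X →ₗ[ℝ] X)).comap (LinearMap.range (q : X →ₗ[ℝ] X)).subtype)

/-- `S` is commensurate with (is a compact perturbation of) the range of the continuous
idempotent `q`: the projection of `S` onto `range q` is Fredholm and the projection of
`S` onto the complement `ker q` is a compact operator. -/
def Commensurate {X : Type*} [NormedAddCommGroup X] [NormedSpace ℝ X]
    (q : X →L[ℝ] X) (S : Submodule ℝ X) : Prop :=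
  IsFredholmRestriction q S ∧
    IsCompactOperator ((ContinuousLinearMap.id ℝ X - q).comp S.subtypeL)

/-- A continuous linear map whose range lies in a finite-dimensional submodule is compact. -/
theorem aux_compact_of_range_le {Y X : Type*} [NormedAddCommGroup Y] [NormedSpace ℝ Y]
    [NormedAddCommGroup X] [NormedSpace ℝ X] (f : Y →L[ℝ] X) (F : Submodule ℝ X)
    (hFd : FiniteDimensional ℝ F) (hf : ∀ y, f y ∈ F) : IsCompactOperator f := by
  haveI := hFd
  set c : Y →L[ℝ] F := f.codRestrict F hf with hc
  obtain ⟨K, hKc, hKmem⟩ := exists_compact_mem_nhds (0 : F)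
  have hcc : IsCompactOperator c :=
    ⟨K, hKc, c.continuous.continuousAt.preimage_mem_nhds (by simpa using hKmem)⟩
  have : (⇑F.subtypeL ∘ ⇑c) = ⇑f := rfl
  exact this ▸ hcc.clm_comp F.subtypeL

/-- The sup of a closed submodule and a finite-dimensional submodule is closed. -/
theorem aux_isClosed_sup {X : Type*} [NormedAddCommGroup X] [NormedSpace ℝ X]
    (p q : Submodule ℝ X) (hp : IsClosed (p : Set X)) (hq : FiniteDimensional ℝ q) :
    IsClosed ((p ⊔ q : Submodule ℝ X) : Set X) := by
  haveI : IsClosed (p : Set X) := hp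
  haveI := hq
  have hcont : Continuous p.mkQ :=
    AddMonoidHomClass.continuous_of_bound p.mkQ 1
      (fun x => by simpa using Submodule.Quotient.norm_mk_le p x)
  have hset : ((p ⊔ q : Submodule ℝ X) : Set X)
      = ⇑p.mkQ ⁻¹' ((q.map p.mkQ : Submodule ℝ (X ⧸ p)) : Set (X ⧸ p)) := by
    ext x
    simp only [Set.mem_preimage, SetLike.mem_coe, Submodule.mem_map]
    constructor
    · intro hx
      obtain ⟨a, ha, b, hb, rfl⟩ := Submodule.mem_sup.mp hx
      refine ⟨b, hb, ?_⟩
      rw [map_add]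
      have : p.mkQ a = 0 := by
        simpa [Submodule.mkQ_apply, Submodule.Quotient.mk_eq_zero] using ha
      rw [this, zero_add]
    · rintro ⟨b, hb, heq⟩
      have : x - b ∈ p := by
        rw [← Submodule.Quotient.eq]
        simpa [Submodule.mkQ_apply] using heq.symm
      exact Submodule.mem_sup.mpr ⟨x - b, this, b, hb, by abel⟩
  rw [hset]
  exact ((q.map p.mkQ).closed_of_finiteDimensional).preimage hcont

/-- Image of a finite-dimensional submodule under a CLM is finite dimensional. -/
theorem aux_fd_map {X Y : Type*} [NormedAddCommGroup X] [NormedSpace ℝ X]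
    [NormedAddCommGroup Y] [NormedSpace ℝ Y] (f : X →L[ℝ] Y) (p : Submodule ℝ X)
    (hp : FiniteDimensional ℝ p) : FiniteDimensional ℝ (p.map (f : X →ₗ[ℝ] Y)) := by
  haveI := hp
  have : p.map (f : X →ₗ[ℝ] Y) = p.map (f : X →ₗ[ℝ] Y) := rfl
  rw [this]
  infer_instance

theorem commensurate_iff_graph_map_compact
    {X : Type*} [NormedAddCommGroup X] [NormedSpace ℝ X] [CompleteSpace X]
    (U V : Submodule ℝ X) (hUc : IsClosed (U : Set X)) (hVc : IsClosed (V : Set X))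
    (π : X →L[ℝ] X) (hidem : IsIdempotentElem π)
    (hrange : LinearMap.range (π : X →ₗ[ℝ] X) = U) (hker : LinearMap.ker (π : X →ₗ[ℝ] X) = V)
    (U' : Submodule ℝ X) (hU'c : IsClosed (U' : Set X))
    (hFred : IsFredholmRestriction π U')
    -- the graph decomposition `U' = {x + Tx : x ∈ π(U')} ⊕ F`, `F = U' ⊓ ker π`
    (T : X →L[ℝ] X) (hTV : ∀ x ∈ U'.map (π : X →ₗ[ℝ] X), T x ∈ V)
    (hdisj : Disjoint ((U'.map (π : X →ₗ[ℝ] X)).map ((ContinuousLinearMap.id ℝ X + T : X →L[ℝ] X) : X →ₗ[ℝ] X))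
      (U' ⊓ LinearMap.ker (π : X →ₗ[ℝ] X)))
    (hsum : ((U'.map (π : X →ₗ[ℝ] X)).map ((ContinuousLinearMap.id ℝ X + T : X →L[ℝ] X) : X →ₗ[ℝ] X)) ⊔ (U' ⊓ LinearMap.ker (π : X →ₗ[ℝ] X)) = U') :
    -- `U'` is commensurate with `U` iff `T : π(U') → V` is compact
    (Commensurate π U' ↔ IsCompactOperator (T.comp (U'.map (π : X →ₗ[ℝ] X)).subtypeL)) ∧
    -- and in that case `U` is commensurate with `U'` (symmetry of commensurability)
    (IsCompactOperator (T.comp (U'.map (π : X →ₗ[ℝ] X)).subtypeL) →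
      ∃ ρ : X →L[ℝ] X, IsIdempotentElem ρ ∧ LinearMap.range (ρ : X →ₗ[ℝ] X) = U' ∧ Commensurate ρ U) := by
  subst hrange
  subst hker
  set Tp : X →L[ℝ] X := ContinuousLinearMap.id ℝ X + T with hTpdef
  have hTp_apply : ∀ x, Tp x = x + T x := fun x => rfl
  -- basic facts about the idempotent π
  have hππ : ∀ x : X, π (π x) = π x := fun x => DFunLike.congr_fun hidem x
  have hU_eq : ∀ u ∈ LinearMap.range (π : X →ₗ[ℝ] X), π u = u := by
    rintro u ⟨x, rfl⟩; exact hππ x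
  have hWle : U'.map (π : X →ₗ[ℝ] X) ≤ LinearMap.range (π : X →ₗ[ℝ] X) := by
    rintro x ⟨y, hy, rfl⟩; exact LinearMap.mem_range_self (π : X →ₗ[ℝ] X) y
  have hπTp : ∀ w ∈ U'.map (π : X →ₗ[ℝ] X), π (Tp w) = w := by
    intro w hw
    have h1 : π (T w) = 0 := hTV w hw
    rw [hTp_apply, map_add, h1, add_zero, hU_eq w (hWle hw)]
  have hGle : (U'.map (π : X →ₗ[ℝ] X)).map (Tp : X →ₗ[ℝ] X) ≤ U' := le_trans le_sup_left (le_of_eq hsum)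
  have hFle : (U' ⊓ LinearMap.ker (π : X →ₗ[ℝ] X)) ≤ U' := inf_le_left
  haveI hFmfd : FiniteDimensional ℝ ↥(U' ⊓ LinearMap.ker (π : X →ₗ[ℝ] X)) := hFred.1
  -- ### Part 1, backward: T compact → (1-π)|U' compact
  have part1back : IsCompactOperator ⇑(T.comp (U'.map (π : X →ₗ[ℝ] X)).subtypeL) →
      IsCompactOperator ⇑((ContinuousLinearMap.id ℝ X - π).comp U'.subtypeL) := by
    intro hT
    set A1 : ↥U' →L[ℝ] X := (T.comp (U'.map (π : X →ₗ[ℝ] X)).subtypeL).comp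
      (ContinuousLinearMap.codRestrict (π.comp U'.subtypeL) (U'.map (π : X →ₗ[ℝ] X))
        (fun u => Submodule.mem_map_of_mem u.2)) with hA1def
    have hA1 : IsCompactOperator ⇑A1 := hT.comp_clm _
    set A2 : ↥U' →L[ℝ] X := (ContinuousLinearMap.id ℝ X - Tp.comp π).comp U'.subtypeL with hA2def
    have hA2mem : ∀ u : ↥U', A2 u ∈ U' ⊓ LinearMap.ker (π : X →ₗ[ℝ] X) := by
      intro u
      have hπu : (π u.1) ∈ U'.map (π : X →ₗ[ℝ] X) := Submodule.mem_map_of_mem u.2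
      have hval : A2 u = u.1 - Tp (π u.1) := rfl
      constructor
      · rw [hval]
        exact sub_mem u.2 (hGle (Submodule.mem_map_of_mem hπu))
      · have : π (A2 u) = 0 := by
          rw [hval, map_sub, hπTp (π u.1) hπu, sub_self]
        exact this
    have hA2 : IsCompactOperator ⇑A2 :=
      aux_compact_of_range_le A2 (U' ⊓ LinearMap.ker (π : X →ₗ[ℝ] X)) hFmfd hA2mem
    have heq : ⇑((ContinuousLinearMap.id ℝ X - π).comp U'.subtypeL) = ⇑A1 + ⇑A2 := by
      funext u
      show u.1 - π u.1 = T (π u.1) + (u.1 - Tp (π u.1))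
      rw [hTp_apply]
      abel
    rw [heq]
    exact hA1.add hA2
  -- ### Part 1, forward: (1-π)|U' compact → T compact
  have part1fwd : IsCompactOperator ⇑((ContinuousLinearMap.id ℝ X - π).comp U'.subtypeL) →
      IsCompactOperator ⇑(T.comp (U'.map (π : X →ₗ[ℝ] X)).subtypeL) := by
    intro hK
    set j : ↥(U'.map (π : X →ₗ[ℝ] X)) →L[ℝ] ↥U' := ContinuousLinearMap.codRestrict
      (Tp.comp (U'.map (π : X →ₗ[ℝ] X)).subtypeL) U' (fun w => hGle (Submodule.mem_map_of_mem w.2)) with hjdef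
    have heq : ⇑(T.comp (U'.map (π : X →ₗ[ℝ] X)).subtypeL)
        = ⇑((ContinuousLinearMap.id ℝ X - π).comp U'.subtypeL) ∘ ⇑j := by
      funext w
      show T w.1 = Tp w.1 - π (Tp w.1)
      rw [hπTp w.1 w.2, hTp_apply]
      abel
    rw [heq]
    exact hK.comp_clm j
  refine ⟨⟨fun h => part1fwd h.2, fun hT => ⟨hFred, part1back hT⟩⟩, ?_⟩
  -- ### Part 2: construction of the projection ρ onto U'
  intro hT
  -- finite-dimensional complement E of W := π(U') inside U = range π
  obtain ⟨E', hE'compl⟩ :=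
    Submodule.exists_isCompl ((U'.map (π : X →ₗ[ℝ] X)).comap (LinearMap.range (π : X →ₗ[ℝ] X)).subtype)
  haveI hE'fd : FiniteDimensional ℝ ↥E' := by
    haveI := hFred.2.2
    exact (Submodule.quotientEquivOfIsCompl _ _ hE'compl).finiteDimensional
  set E : Submodule ℝ X := E'.map (LinearMap.range (π : X →ₗ[ℝ] X)).subtype with hEdef
  haveI hEfd : FiniteDimensional ℝ ↥E := by
    have : E = E'.map ((LinearMap.range (π : X →ₗ[ℝ] X)).subtype : ↥(LinearMap.range (π : X →ₗ[ℝ] X)) →ₗ[ℝ] X) := rfl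
    rw [this]; infer_instance
  have hWE : U'.map (π : X →ₗ[ℝ] X) ⊔ E = LinearMap.range (π : X →ₗ[ℝ] X) := by
    have h := congrArg (Submodule.map (LinearMap.range (π : X →ₗ[ℝ] X)).subtype) hE'compl.sup_eq_top
    rwa [Submodule.map_sup, Submodule.map_comap_subtype, inf_eq_right.mpr hWle,
      Submodule.map_top, Submodule.range_subtype] at h
  -- the continuous projection qX of X onto W, vanishing on E and on ker π
  have hWtclosed : IsClosed
      (((U'.map (π : X →ₗ[ℝ] X)).comap (LinearMap.range (π : X →ₗ[ℝ] X)).subtype : Submodule ℝ ↥(LinearMap.range (π : X →ₗ[ℝ] X))) :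
        Set ↥(LinearMap.range (π : X →ₗ[ℝ] X))) :=
    hFred.2.1.preimage continuous_subtype_val
  have hE'closed : IsClosed (E' : Set ↥(LinearMap.range (π : X →ₗ[ℝ] X))) := E'.closed_of_finiteDimensional
  haveI : CompleteSpace ↥(LinearMap.range (π : X →ₗ[ℝ] X)) := hUc.completeSpace_coe
  set Wt := (U'.map (π : X →ₗ[ℝ] X)).comap (LinearMap.range (π : X →ₗ[ℝ] X)).subtype with hWtdef
  set pU := Wt.linearProjOfClosedCompl E' hE'compl hWtclosed hE'closed with hpUdef
  have hpU_left : ∀ y : ↥(LinearMap.range (π : X →ₗ[ℝ] X)), ∀ hy : y ∈ Wt, pU y = ⟨y, hy⟩ := by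
    intro y hy
    have := Submodule.linearProjOfIsCompl_apply_left hE'compl (⟨y, hy⟩ : ↥Wt)
    simpa [hpUdef, Submodule.coe_continuous_linearProjOfClosedCompl'] using this
  have hpU_right : ∀ y : ↥(LinearMap.range (π : X →ₗ[ℝ] X)), y ∈ E' → pU y = 0 := by
    intro y hy
    have := Submodule.linearProjOfIsCompl_apply_right hE'compl (⟨y, hy⟩ : ↥E')
    simpa [hpUdef, Submodule.coe_continuous_linearProjOfClosedCompl'] using this
  set πr : X →L[ℝ] ↥(LinearMap.range (π : X →ₗ[ℝ] X)) :=
    π.codRestrict (LinearMap.range (π : X →ₗ[ℝ] X)) (fun x => LinearMap.mem_range_self (π : X →ₗ[ℝ] X) x) with hπrdef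
  set qX : X →L[ℝ] X :=
    (LinearMap.range (π : X →ₗ[ℝ] X)).subtypeL.comp (Wt.subtypeL.comp (pU.comp πr)) with hqXdef
  have hq_memW : ∀ x, qX x ∈ U'.map (π : X →ₗ[ℝ] X) := by
    intro x
    exact Submodule.mem_comap.mp (pU (πr x)).2
  have hq_fixW : ∀ w ∈ U'.map (π : X →ₗ[ℝ] X), qX w = w := by
    intro w hw
    have hwU : w ∈ LinearMap.range (π : X →ₗ[ℝ] X) := hWle hw
    have h1 : πr w = ⟨w, hwU⟩ := Subtype.ext (hU_eq w hwU)
    have hmem : (⟨w, hwU⟩ : ↥(LinearMap.range (π : X →ₗ[ℝ] X))) ∈ Wt := Submodule.mem_comap.mpr hw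
    show ((Wt.subtype (pU (πr w)) : ↥(LinearMap.range (π : X →ₗ[ℝ] X))) : X) = w
    rw [h1, hpU_left _ hmem]
    rfl
  have hq_kerV : ∀ v ∈ LinearMap.ker (π : X →ₗ[ℝ] X), qX v = 0 := by
    intro v hv
    have h1 : πr v = 0 := Subtype.ext (LinearMap.mem_ker.mp hv)
    show ((Wt.subtype (pU (πr v)) : ↥(LinearMap.range (π : X →ₗ[ℝ] X))) : X) = 0
    rw [h1, map_zero]
    rfl
  have hq_kerE : ∀ e ∈ E, qX e = 0 := by
    rintro e ⟨e', he', rfl⟩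
    have h1 : πr ((LinearMap.range (π : X →ₗ[ℝ] X)).subtype e') = e' :=
      Subtype.ext (hU_eq _ e'.2)
    show ((Wt.subtype (pU (πr ((LinearMap.range (π : X →ₗ[ℝ] X)).subtype e'))) : ↥(LinearMap.range (π : X →ₗ[ℝ] X))) : X) = 0
    rw [h1, hpU_right _ he', map_zero]
    rfl
  -- G := (1+T)(W) is closed
  have hπG : ∀ x ∈ (U'.map (π : X →ₗ[ℝ] X)).map (Tp : X →ₗ[ℝ] X), π x ∈ U'.map (π : X →ₗ[ℝ] X) ∧ Tp (π x) = x := by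
    rintro x ⟨w, hw, rfl⟩
    rw [ContinuousLinearMap.coe_coe, hπTp w hw]
    exact ⟨hw, rfl⟩
  have hGclosed : IsClosed (((U'.map (π : X →ₗ[ℝ] X)).map (Tp : X →ₗ[ℝ] X) : Submodule ℝ X) : Set X) := by
    have hset : (((U'.map (π : X →ₗ[ℝ] X)).map (Tp : X →ₗ[ℝ] X) : Submodule ℝ X) : Set X)
        = ⇑(ContinuousLinearMap.id ℝ X - Tp.comp π) ⁻¹' {0}
          ∩ ⇑π ⁻¹' ((U'.map (π : X →ₗ[ℝ] X) : Submodule ℝ X) : Set X) := by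
      ext x
      simp only [Set.mem_inter_iff, Set.mem_preimage, Set.mem_singleton_iff, SetLike.mem_coe]
      constructor
      · intro hx
        obtain ⟨hmem, heq⟩ := hπG x hx
        exact ⟨by show x - Tp (π x) = 0; rw [heq, sub_self], hmem⟩
      · rintro ⟨h1, h2⟩
        have hx : x = Tp (π x) := by
          have h3 : x - Tp (π x) = 0 := h1
          exact sub_eq_zero.mp h3
        exact ⟨π x, h2, hx.symm⟩
    rw [hset]
    exact (isClosed_singleton.preimage (ContinuousLinearMap.continuous _)).inter
      (hFred.2.1.preimage π.continuous)
  -- the finite-rank map s : projection onto F := U' ⊓ ker π vanishing on G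
  haveI : CompleteSpace ↥U' := hU'c.completeSpace_coe
  set Fh := (U' ⊓ LinearMap.ker (π : X →ₗ[ℝ] X)).comap U'.subtype with hFhdef
  set Gh := ((U'.map (π : X →ₗ[ℝ] X)).map (Tp : X →ₗ[ℝ] X)).comap U'.subtype with hGhdef
  haveI hFhfd : FiniteDimensional ℝ ↥Fh :=
    (Submodule.comapSubtypeEquivOfLe hFle).symm.finiteDimensional
  have hFhclosed : IsClosed (Fh : Set ↥U') := Fh.closed_of_finiteDimensional
  have hGhclosed : IsClosed (Gh : Set ↥U') := hGclosed.preimage continuous_subtype_val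
  have hcompl : IsCompl Fh Gh := by
    constructor
    · rw [Submodule.disjoint_def]
      intro x hxF hxG
      exact Subtype.ext (Submodule.disjoint_def.mp hdisj.symm x.1 hxF hxG)
    · rw [codisjoint_iff_le_sup]
      intro x _
      have hx : (x : X) ∈ ((U'.map (π : X →ₗ[ℝ] X)).map (Tp : X →ₗ[ℝ] X)) ⊔ (U' ⊓ LinearMap.ker (π : X →ₗ[ℝ] X)) := by
        rw [hsum]; exact x.2
      obtain ⟨g, hg, f, hf, hgf⟩ := Submodule.mem_sup.mp hx
      refine Submodule.mem_sup.mpr ⟨⟨f, hFle hf⟩, hf, ⟨g, hGle hg⟩, hg, ?_⟩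
      exact Subtype.ext (by simpa [add_comm] using hgf)
  set pF := Fh.linearProjOfClosedCompl Gh hcompl hFhclosed hGhclosed with hpFdef
  have hpF_left : ∀ y : ↥U', ∀ hy : y ∈ Fh, pF y = ⟨y, hy⟩ := by
    intro y hy
    have := Submodule.linearProjOfIsCompl_apply_left hcompl (⟨y, hy⟩ : ↥Fh)
    simpa [hpFdef, Submodule.coe_continuous_linearProjOfClosedCompl'] using this
  have hpF_right : ∀ y : ↥U', y ∈ Gh → pF y = 0 := by
    intro y hy
    have := Submodule.linearProjOfIsCompl_apply_right hcompl (⟨y, hy⟩ : ↥Gh)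
    simpa [hpFdef, Submodule.coe_continuous_linearProjOfClosedCompl'] using this
  set f1 : ↥U' →L[ℝ] ↥(U' ⊓ LinearMap.ker (π : X →ₗ[ℝ] X)) :=
    ContinuousLinearMap.codRestrict (U'.subtypeL.comp (Fh.subtypeL.comp pF))
      (U' ⊓ LinearMap.ker (π : X →ₗ[ℝ] X)) (fun u => (pF u).2) with hf1def
  haveI : FiniteDimensional ℝ ↥(LinearMap.range (f1 : ↥U' →ₗ[ℝ] ↥(U' ⊓ LinearMap.ker (π : X →ₗ[ℝ] X)))) := by
    haveI := hFmfd
    infer_instance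
  obtain ⟨g, hg⟩ := f1.exist_extension_of_finiteDimensional_range
  set s : X →L[ℝ] X := (U' ⊓ LinearMap.ker (π : X →ₗ[ℝ] X)).subtypeL.comp g with hsdef
  have hs_mem : ∀ x, s x ∈ U' ⊓ LinearMap.ker (π : X →ₗ[ℝ] X) := fun x => (g x).2
  have hs_U' : ∀ u : ↥U', s u.1 = ((Fh.subtype (pF u) : ↥U') : X) := by
    intro u
    have h1 : g u.1 = f1 u := (DFunLike.congr_fun hg u).symm
    show ((g u.1 : ↥(U' ⊓ LinearMap.ker (π : X →ₗ[ℝ] X))) : X) = _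
    rw [h1]
    rfl
  have hs_fix : ∀ f ∈ U' ⊓ LinearMap.ker (π : X →ₗ[ℝ] X), s f = f := by
    intro f hf
    have hfU' : f ∈ U' := hFle hf
    have hmem : (⟨f, hfU'⟩ : ↥U') ∈ Fh := Submodule.mem_comap.mpr hf
    rw [hs_U' ⟨f, hfU'⟩, hpF_left _ hmem]
    rfl
  have hs_G : ∀ gx ∈ (U'.map (π : X →ₗ[ℝ] X)).map (Tp : X →ₗ[ℝ] X), s gx = 0 := by
    intro gx hgx
    have hgxU' : gx ∈ U' := hGle hgx
    have hmem : (⟨gx, hgxU'⟩ : ↥U') ∈ Gh := Submodule.mem_comap.mpr hgx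
    rw [hs_U' ⟨gx, hgxU'⟩, hpF_right _ hmem, map_zero]
    rfl
  -- the projection ρ onto U'
  set ρ : X →L[ℝ] X := Tp.comp qX + s with hρdef
  have hρ_apply : ∀ x, ρ x = Tp (qX x) + s x := fun x => rfl
  have hρ_memU' : ∀ x, ρ x ∈ U' := fun x =>
    add_mem (hGle (Submodule.mem_map_of_mem (hq_memW x))) (hFle (hs_mem x))
  have hq_Tp : ∀ w ∈ U'.map (π : X →ₗ[ℝ] X), qX (Tp w) = w := by
    intro w hw
    rw [hTp_apply, map_add, hq_fixW w hw, hq_kerV (T w) (hTV w hw), add_zero]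
  have hρ_fix : ∀ u ∈ U', ρ u = u := by
    intro u hu
    have hu2 : u ∈ ((U'.map (π : X →ₗ[ℝ] X)).map (Tp : X →ₗ[ℝ] X)) ⊔ (U' ⊓ LinearMap.ker (π : X →ₗ[ℝ] X)) := by rw [hsum]; exact hu
    obtain ⟨gx, hgx, f, hf, rfl⟩ := Submodule.mem_sup.mp hu2
    obtain ⟨w, hw, rfl⟩ := hgx
    have h1 : qX (Tp w + f) = w := by
      rw [map_add, hq_Tp w hw, hq_kerV f hf.2, add_zero]
    have h2 : s (Tp w + f) = f := by
      rw [map_add, hs_G (Tp w) (Submodule.mem_map_of_mem hw), hs_fix f hf, zero_add]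
    rw [ContinuousLinearMap.coe_coe, hρ_apply, h1, h2]
  have hidρ : IsIdempotentElem ρ := by
    refine ContinuousLinearMap.ext fun x => ?_
    show ρ (ρ x) = ρ x
    exact hρ_fix (ρ x) (hρ_memU' x)
  have hρ_range : LinearMap.range (ρ : X →ₗ[ℝ] X) = U' := by
    apply le_antisymm
    · rintro x ⟨y, rfl⟩; exact hρ_memU' y
    · intro u hu; exact ⟨u, hρ_fix u hu⟩
  refine ⟨ρ, hidρ, hρ_range, ⟨⟨?_, ?_, ?_⟩, ?_⟩⟩
  -- (a) finite-dimensional kernel part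
  · have hle : LinearMap.range (π : X →ₗ[ℝ] X) ⊓ LinearMap.ker (ρ : X →ₗ[ℝ] X) ≤ E := by
      rintro u ⟨huU, huK⟩
      have hu2 : u ∈ (U'.map (π : X →ₗ[ℝ] X)) ⊔ E := by rw [hWE]; exact huU
      obtain ⟨w, hw, e, he, rfl⟩ := Submodule.mem_sup.mp hu2
      have hq : qX (w + e) = w := by rw [map_add, hq_fixW w hw, hq_kerE e he, add_zero]
      have h0 : Tp w + s (w + e) = 0 := by
        have : ρ (w + e) = 0 := huK
        rwa [hρ_apply, hq] at this
      have hTw : Tp w ∈ (U'.map (π : X →ₗ[ℝ] X)).map (Tp : X →ₗ[ℝ] X) := Submodule.mem_map_of_mem hw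
      have h1 : Tp w = 0 := by
        have hmem2 : Tp w ∈ U' ⊓ LinearMap.ker (π : X →ₗ[ℝ] X) := by
          have : Tp w = -(s (w + e)) := eq_neg_of_add_eq_zero_left h0
          rw [this]
          exact neg_mem (hs_mem _)
        exact Submodule.disjoint_def.mp hdisj _ hTw hmem2
      have hw0 : w = 0 := by
        have h2 := congrArg π h1
        rwa [hπTp w hw, map_zero] at h2
      rw [hw0, zero_add]
      exact he
    exact Submodule.finiteDimensional_of_le hle
  -- (b) closed image
  · have hWmapρ_closed : IsClosed (((U'.map (π : X →ₗ[ℝ] X)).map (ρ : X →ₗ[ℝ] X) : Submodule ℝ X) : Set X) := by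
      have hπρ_W : ∀ w ∈ U'.map (π : X →ₗ[ℝ] X), π (ρ w) = w := by
        intro w hw
        have h1 : ρ w = Tp w + s w := by rw [hρ_apply, hq_fixW w hw]
        have h2 : π (s w) = 0 := (hs_mem w).2
        rw [h1, map_add, hπTp w hw, h2, add_zero]
      have hset : (((U'.map (π : X →ₗ[ℝ] X)).map (ρ : X →ₗ[ℝ] X) : Submodule ℝ X) : Set X)
          = ⇑(ContinuousLinearMap.id ℝ X - ρ.comp π) ⁻¹' {0}
            ∩ ⇑π ⁻¹' ((U'.map (π : X →ₗ[ℝ] X) : Submodule ℝ X) : Set X) := by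
        ext x
        simp only [Set.mem_inter_iff, Set.mem_preimage, Set.mem_singleton_iff, SetLike.mem_coe]
        constructor
        · rintro ⟨w, hw, rfl⟩
          have h1 : π (ρ w) = w := hπρ_W w hw
          constructor
          · show ρ w - ρ (π (ρ w)) = 0
            rw [h1, sub_self]
          · rw [ContinuousLinearMap.coe_coe, h1]; exact hw
        · rintro ⟨h1, h2⟩
          refine ⟨π x, h2, ?_⟩
          have hx : x - ρ (π x) = 0 := h1
          exact (sub_eq_zero.mp hx).symm
      rw [hset]
      exact (isClosed_singleton.preimage (ContinuousLinearMap.continuous _)).inter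
        (hFred.2.1.preimage π.continuous)
    have hUmapρ : (LinearMap.range (π : X →ₗ[ℝ] X)).map (ρ : X →ₗ[ℝ] X) = (U'.map (π : X →ₗ[ℝ] X)).map (ρ : X →ₗ[ℝ] X) ⊔ E.map (ρ : X →ₗ[ℝ] X) := by
      rw [← hWE, Submodule.map_sup]
    rw [hUmapρ]
    exact aux_isClosed_sup _ _ hWmapρ_closed (aux_fd_map ρ E hEfd)
  -- (c) finite-dimensional cokernel
  · have hFρle : U' ⊓ LinearMap.ker (π : X →ₗ[ℝ] X) ≤ LinearMap.range (ρ : X →ₗ[ℝ] X) := by rw [hρ_range]; exact hFle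
    set Q := (((LinearMap.range (π : X →ₗ[ℝ] X)).map (ρ : X →ₗ[ℝ] X)).comap (LinearMap.range (ρ : X →ₗ[ℝ] X)).subtype) with hQdef
    set ψ : ↥(U' ⊓ LinearMap.ker (π : X →ₗ[ℝ] X)) →ₗ[ℝ] (↥(LinearMap.range (ρ : X →ₗ[ℝ] X)) ⧸ Q) :=
      Q.mkQ.comp (Submodule.inclusion hFρle) with hψdef
    have hsurj : Function.Surjective ψ := by
      intro z
      obtain ⟨⟨x, hx⟩, rfl⟩ := Q.mkQ_surjective z
      have hxU' : x ∈ U' := by rw [← hρ_range]; exact hx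
      have hπx : π x ∈ U'.map (π : X →ₗ[ℝ] X) := Submodule.mem_map_of_mem hxU'
      have hρπx : ρ (π x) = Tp (π x) + s (π x) := by rw [hρ_apply, hq_fixW _ hπx]
      have hfF : x - ρ (π x) ∈ U' ⊓ LinearMap.ker (π : X →ₗ[ℝ] X) := by
        constructor
        · exact sub_mem hxU' (hρ_memU' (π x))
        · have hππx : π (ρ (π x)) = π x := by
            have h2 : π (s (π x)) = 0 := (hs_mem (π x)).2
            rw [hρπx, map_add, hπTp _ hπx, h2, add_zero]
          show π (x - ρ (π x)) = 0
          rw [map_sub, hππx, sub_self]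
      refine ⟨⟨x - ρ (π x), hfF⟩, ?_⟩
      show Q.mkQ (Submodule.inclusion hFρle ⟨x - ρ (π x), hfF⟩) = Q.mkQ ⟨x, hx⟩
      rw [Submodule.mkQ_apply, Submodule.mkQ_apply, Submodule.Quotient.eq]
      have hmem : ρ (π x) ∈ (LinearMap.range (π : X →ₗ[ℝ] X)).map (ρ : X →ₗ[ℝ] X) :=
        ⟨π x, LinearMap.mem_range_self (π : X →ₗ[ℝ] X) x, rfl⟩
      have : (Submodule.inclusion hFρle ⟨x - ρ (π x), hfF⟩ : ↥(LinearMap.range (ρ : X →ₗ[ℝ] X)))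
          - ⟨x, hx⟩ = ⟨-(ρ (π x)), neg_mem ⟨π x, rfl⟩⟩ := by
        apply Subtype.ext
        show (x - ρ (π x)) - x = -(ρ (π x))
        abel
      rw [this]
      show -(ρ (π x)) ∈ (LinearMap.range (π : X →ₗ[ℝ] X)).map (ρ : X →ₗ[ℝ] X)
      exact neg_mem hmem
    exact Module.Finite.of_surjective ψ hsurj
  -- compactness of (1 - ρ)|U
  · set B1 : ↥(LinearMap.range (π : X →ₗ[ℝ] X)) →L[ℝ] X :=
      (ContinuousLinearMap.id ℝ X - qX).comp (LinearMap.range (π : X →ₗ[ℝ] X)).subtypeL with hB1def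
    have hB1mem : ∀ u : ↥(LinearMap.range (π : X →ₗ[ℝ] X)), B1 u ∈ E := by
      intro u
      have hu2 : u.1 ∈ (U'.map (π : X →ₗ[ℝ] X)) ⊔ E := by rw [hWE]; exact u.2
      obtain ⟨w, hw, e, he, heq⟩ := Submodule.mem_sup.mp hu2
      have hq : qX u.1 = w := by rw [← heq, map_add, hq_fixW w hw, hq_kerE e he, add_zero]
      have : B1 u = e := by
        show u.1 - qX u.1 = e
        rw [hq, ← heq]
        abel
      rw [this]
      exact he
    have hB1 : IsCompactOperator ⇑B1 := aux_compact_of_range_le B1 E hEfd hB1mem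
    set B2 : ↥(LinearMap.range (π : X →ₗ[ℝ] X)) →L[ℝ] X := (T.comp (U'.map (π : X →ₗ[ℝ] X)).subtypeL).comp
      (ContinuousLinearMap.codRestrict (qX.comp (LinearMap.range (π : X →ₗ[ℝ] X)).subtypeL) (U'.map (π : X →ₗ[ℝ] X))
        (fun u => hq_memW u.1)) with hB2def
    have hB2 : IsCompactOperator ⇑B2 := hT.comp_clm _
    set B3 : ↥(LinearMap.range (π : X →ₗ[ℝ] X)) →L[ℝ] X := s.comp (LinearMap.range (π : X →ₗ[ℝ] X)).subtypeL with hB3def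
    have hB3 : IsCompactOperator ⇑B3 :=
      aux_compact_of_range_le B3 (U' ⊓ LinearMap.ker (π : X →ₗ[ℝ] X)) hFmfd (fun u => hs_mem u.1)
    have heq : ⇑((ContinuousLinearMap.id ℝ X - ρ).comp (LinearMap.range (π : X →ₗ[ℝ] X)).subtypeL)
        = ⇑B1 - ⇑B2 - ⇑B3 := by
      funext u
      show u.1 - ρ u.1 = (u.1 - qX u.1) - T (qX u.1) - s u.1
      rw [hρ_apply, hTp_apply]
      abel
    rw [heq]
    exact (hB1.sub hB2).sub hB3
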